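/- Proposition (one-step bounds with a source term, core of the proof of Lemma 5.2). Let a directed graph on the finite vertex set V = {0,…,N−1} with distinguished vertex 0 be given, let γ > 0, let k ∈ V and r ≥ 1 with k ∼ᵣ 0, and let h* be the least h ∈ ℕ with 𝒩₀^(h) = ∅. Assume 𝒩₀^(r+1) ≠ ∅ with s := max_{j ∈ 𝒩₀^(r+1)} N_j^r > 0, and assume that all the denominators appearing in the definitions of γ_h (for 1 ≤ h < h*) and of γ̃_j (for r < j < h*) in the context are positive. Let (Cⁱ)_{i∈V} be nonnegative reals satisfying Cⁱ ≤ E·𝟙_{i=k} + γ·∑_{j∈𝒩 i} Cʲ for every i ∈ V, where E ≥ 0. Then for every h ∈ {0,…,h*−1} one has ∑_{i ∼ₕ 0} Cⁱ ≤ γ̃_h·E·𝟙_{h ≥ r} + γ_h · ∑_{i ∼_{h+1} 0} Cⁱ, and consequently C⁰ ≤ ( ∑_{j=r}^{h*−1} (∏_{i=0}^{j−1} γ_i)·γ̃_j ) · E. -/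

import Mathlib

/-- `N_k^h = #{j ∈ 𝒩₀^(h) : k ∈ 𝒩 j}`. -/
def Nkh {V : Type*} [DecidableEq V] (𝒩 : V → Finset V) (S : ℕ → Finset V)
    (h : ℕ) (k : V) : ℕ :=
  ((S h).filter fun j => k ∈ 𝒩 j).card

/-- `max_{k ∈ 𝒩₀^(i)} N_k^h` (with the convention that a max over `∅` is `0`). -/
def Nmax {V : Type*} [DecidableEq V] (𝒩 : V → Finset V) (S : ℕ → Finset V)
    (i h : ℕ) : ℕ :=
  (S i).sup fun k => Nkh 𝒩 S h k

/-- The denominator `1 − γ·∑_{i=0}^{h} (max_{k ∈ 𝒩₀^(i)} N_k^h)·∏_{j=i}^{h−1} γ_j`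
appearing in the definition of `γ_h`. -/
noncomputable def denom {V : Type*} [DecidableEq V] (𝒩 : V → Finset V)
    (S : ℕ → Finset V) (γ : ℝ) (g : ℕ → ℝ) (h : ℕ) : ℝ :=
  1 - γ * ∑ i ∈ Finset.range (h + 1),
      (Nmax 𝒩 S i h : ℝ) * ∏ j ∈ Finset.Ico i h, g j

/-- `g` is the sequence `(γ_h)`: `γ₀ = γ` and, for `h ≥ 1`,
`γ_h = γ·(max_{k ∈ 𝒩₀^(h+1)} N_k^h) / (1 − γ·∑_{i=0}^{h} (max_{k ∈ 𝒩₀^(i)} N_k^h)·∏_{j=i}^{h−1} γ_j)`. -/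
def gammaSpec {V : Type*} [DecidableEq V] (𝒩 : V → Finset V) (S : ℕ → Finset V)
    (γ : ℝ) (g : ℕ → ℝ) : Prop :=
  g 0 = γ ∧ ∀ h, 1 ≤ h → g h = γ * (Nmax 𝒩 S (h + 1) h : ℝ) / denom 𝒩 S γ g h


open Finset

lemma sphere_disj {V : Type*} [DecidableEq V] (𝒩 : V → Finset V) (S : ℕ → Finset V)
    (hS : ∀ m, S (m + 1) = ((S m).biUnion 𝒩) \ ((Finset.range (m + 1)).biUnion S)) :
    ∀ a b, a < b → Disjoint (S a) (S b) := by
  intro a b hab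
  obtain ⟨m, rfl⟩ : ∃ m, b = a + m + 1 := ⟨b - a - 1, by omega⟩
  rw [Finset.disjoint_right]
  intro x hx hxa
  rw [hS] at hx
  exact (Finset.mem_sdiff.mp hx).2
    (Finset.mem_biUnion.mpr ⟨a, Finset.mem_range.mpr (by omega), hxa⟩)

lemma nbr_mem {V : Type*} [DecidableEq V] (𝒩 : V → Finset V) (S : ℕ → Finset V)
    (hS : ∀ m, S (m + 1) = ((S m).biUnion 𝒩) \ ((Finset.range (m + 1)).biUnion S))
    (h : ℕ) (i j : V) (hi : i ∈ S h) (hj : j ∈ 𝒩 i) :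
    j ∈ (Finset.range (h + 2)).biUnion S := by
  by_cases hcase : j ∈ (Finset.range (h + 1)).biUnion S
  · obtain ⟨l, hl, hmem⟩ := Finset.mem_biUnion.mp hcase
    exact Finset.mem_biUnion.mpr ⟨l, Finset.mem_range.mpr (by have := Finset.mem_range.mp hl; omega), hmem⟩
  · have : j ∈ S (h + 1) := by
      rw [hS h]
      exact Finset.mem_sdiff.mpr ⟨Finset.mem_biUnion.mpr ⟨i, hi, hj⟩, hcase⟩
    exact Finset.mem_biUnion.mpr ⟨h + 1, Finset.mem_range.mpr (by omega), this⟩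

lemma count_lemma {V : Type*} [DecidableEq V] [Fintype V] (𝒩 : V → Finset V)
    (S : ℕ → Finset V) (C : V → ℝ) (h : ℕ) :
    ∑ i ∈ S h, ∑ j ∈ 𝒩 i, C j = ∑ j : V, (Nkh 𝒩 S h j : ℝ) * C j := by
  calc ∑ i ∈ S h, ∑ j ∈ 𝒩 i, C j
      = ∑ i ∈ S h, ∑ j : V, if j ∈ 𝒩 i then C j else 0 := by
        refine Finset.sum_congr rfl fun i _ => ?_
        rw [Finset.sum_ite_mem, Finset.univ_inter]
    _ = ∑ j : V, ∑ i ∈ S h, if j ∈ 𝒩 i then C j else 0 := Finset.sum_comm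
    _ = ∑ j : V, (Nkh 𝒩 S h j : ℝ) * C j := by
        refine Finset.sum_congr rfl fun j _ => ?_
        rw [Nkh, Finset.sum_ite, Finset.sum_const_zero, add_zero, Finset.sum_const,
          nsmul_eq_mul]

lemma unroll (T tg g : ℕ → ℝ) (E : ℝ) :
    ∀ h : ℕ, (∀ m, m < h → 0 ≤ g m) →
      (∀ m, m < h → T m ≤ tg m * E + g m * T (m + 1)) →
      ∀ l, l ≤ h →
        T l ≤ (∑ i ∈ Finset.Ico l h, tg i * ∏ m ∈ Finset.Ico l i, g m) * E +
          (∏ m ∈ Finset.Ico l h, g m) * T h := by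
  intro h
  induction h with
  | zero =>
    intro _ _ l hl
    interval_cases l
    simp
  | succ h ih =>
    intro hg hP l hl
    rcases Nat.lt_or_ge l (h + 1) with hlt | hge
    · have hlh : l ≤ h := by omega
      have H1 := ih (fun m hm => hg m (by omega)) (fun m hm => hP m (by omega)) l hlh
      have H2 := hP h (by omega)
      have hB : 0 ≤ ∏ m ∈ Finset.Ico l h, g m :=
        Finset.prod_nonneg fun m hm => hg m (by have := (Finset.mem_Ico.mp hm).2; omega)
      have H3 : (∏ m ∈ Finset.Ico l h, g m) * T h ≤
          (∏ m ∈ Finset.Ico l h, g m) * (tg h * E + g h * T (h + 1)) :=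
        mul_le_mul_of_nonneg_left H2 hB
      have H4 : T l ≤ (∑ i ∈ Finset.Ico l h, tg i * ∏ m ∈ Finset.Ico l i, g m) * E +
          (∏ m ∈ Finset.Ico l h, g m) * (tg h * E + g h * T (h + 1)) := by linarith
      refine H4.trans (le_of_eq ?_)
      rw [Finset.sum_Ico_succ_top hlh, Finset.prod_Ico_succ_top hlh]
      ring
    · have : l = h + 1 := by omega
      subst this
      simp
/-- **Core of the proof of Lemma 5.2** (one-step bounds with a source term).
The graph is on the finite vertex set `Fin N` with distinguished vertex `0` and
distance spheres `S`; `h*` is the least `h` with `S h = ∅`; `k ∼ᵣ 0` with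
`r ≥ 1`, `S (r+1) ≠ ∅` and `s := max_{j ∈ 𝒩₀^(r+1)} N_j^r > 0`.  Given the
coefficients `γ_h` and the modified coefficients `γ̃_h` (namely `γ̃_h = 0` for
`h < r`, `γ̃_r = γ_r/(γ·s)`, and for `j > r`
`γ̃_j = [γ·∑_{ℓ<j} (max_{k ∈ 𝒩₀^(ℓ)} N_k^j)·∑_{i=max(r,ℓ)}^{j−1} γ̃_i·∏_{h=ℓ}^{i−1} γ_h] / [1 − γ·∑_{i≤j} (max_{k ∈ 𝒩₀^(i)} N_k^j)·∏_{h=i}^{j−1} γ_h]`),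
with all relevant denominators positive, and nonnegative `(Cⁱ)` with
`Cⁱ ≤ E·𝟙_{i=k} + γ·∑_{j∈𝒩 i} Cʲ` for all `i`, one has, for every `h < h*`,
`∑_{i ∼ₕ 0} Cⁱ ≤ γ̃_h·E·𝟙_{h ≥ r} + γ_h·∑_{i ∼_{h+1} 0} Cⁱ`, and consequently
`C⁰ ≤ (∑_{j=r}^{h*−1} (∏_{i=0}^{j−1} γ_i)·γ̃_j)·E`. -/
theorem stmt7 (N : ℕ) [NeZero N]
    (𝒩 : Fin N → Finset (Fin N)) (hloop : ∀ i, i ∉ 𝒩 i)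
    (S : ℕ → Finset (Fin N)) (hS0 : S 0 = {0})
    (hS : ∀ m, S (m + 1) = ((S m).biUnion 𝒩) \ ((Finset.range (m + 1)).biUnion S))
    (γ : ℝ) (hγ : 0 < γ)
    (k : Fin N) (r : ℕ) (hr : 1 ≤ r) (hk : k ∈ S r)
    (hstar : ℕ) (hhstar : S hstar = ∅) (hminimal : ∀ h, h < hstar → (S h).Nonempty)
    (hSr1 : (S (r + 1)).Nonempty) (hs : 0 < Nmax 𝒩 S (r + 1) r)
    (g tg : ℕ → ℝ) (hg : gammaSpec 𝒩 S γ g)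
    (htg0 : ∀ h, h < r → tg h = 0)
    (htgr : tg r = g r / (γ * (Nmax 𝒩 S (r + 1) r : ℝ)))
    (htgj : ∀ j, r < j → tg j =
      (γ * ∑ l ∈ Finset.range j, (Nmax 𝒩 S l j : ℝ) *
          ∑ i ∈ Finset.Ico (max r l) j, tg i * ∏ m ∈ Finset.Ico l i, g m) /
        denom 𝒩 S γ g j)
    (hden : ∀ h, 1 ≤ h → h < hstar → 0 < denom 𝒩 S γ g h)
    (E : ℝ) (hE : 0 ≤ E)
    (C : Fin N → ℝ) (hC0 : ∀ i, 0 ≤ C i)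
    (hC : ∀ i, C i ≤ (if i = k then E else 0) + γ * ∑ j ∈ 𝒩 i, C j) :
    (∀ h, h < hstar → ∑ i ∈ S h, C i ≤
        (if r ≤ h then tg h * E else 0) + g h * ∑ i ∈ S (h + 1), C i) ∧
      C 0 ≤ (∑ j ∈ Finset.Ico r hstar, (∏ i ∈ Finset.range j, g i) * tg j) * E := by

  classical
  obtain ⟨hg0, hgf⟩ := hg
  set T : ℕ → ℝ := fun h => ∑ i ∈ S h, C i with hTdef
  have disj := sphere_disj 𝒩 S hS
  have hkS : ∀ h, k ∈ S h → h = r := by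
    intro h hkh
    by_contra hne
    rcases Nat.lt_or_ge h r with hlt | hge
    · exact Finset.disjoint_left.mp (disj h r hlt) hkh hk
    · exact Finset.disjoint_left.mp (disj r h (by omega)) hk hkh
  have hprop : ∀ m d, S m = ∅ → S (m + d) = ∅ := by
    intro m d hm
    induction d with
    | zero => exact hm
    | succ d ihd =>
      have := hS (m + d)
      rw [show m + (d + 1) = (m + d) + 1 by omega, this, ihd]
      simp
  have hrstar : r + 1 < hstar := by
    by_contra hcon
    push_neg at hcon
    have := hprop hstar (r + 1 - hstar) hhstar
    rw [show hstar + (r + 1 - hstar) = r + 1 by omega] at this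
    exact hSr1.ne_empty this
  have hgnn : ∀ m, m < hstar → 0 ≤ g m := by
    intro m hm
    rcases Nat.eq_zero_or_pos m with rfl | hm1
    · rw [hg0]; exact hγ.le
    · rw [hgf m hm1]
      exact div_nonneg (mul_nonneg hγ.le (Nat.cast_nonneg _)) (hden m hm1 hm).le
  -- master inequality
  have master : ∀ h, T h ≤ (if h = r then E else 0) +
      γ * ∑ l ∈ Finset.range (h + 2), (Nmax 𝒩 S l h : ℝ) * T l := by
    intro h
    have h1 : T h ≤ (∑ i ∈ S h, if i = k then E else 0) +
        γ * ∑ i ∈ S h, ∑ j ∈ 𝒩 i, C j := by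
      calc T h ≤ ∑ i ∈ S h, ((if i = k then E else 0) + γ * ∑ j ∈ 𝒩 i, C j) :=
            Finset.sum_le_sum fun i _ => hC i
        _ = _ := by rw [Finset.sum_add_distrib, Finset.mul_sum]
    have h2 : (∑ i ∈ S h, if i = k then E else 0) = if h = r then E else 0 := by
      rw [Finset.sum_ite_eq' (S h) k fun _ => E]
      by_cases hh : h = r
      · subst hh; rw [if_pos hk, if_pos rfl]
      · rw [if_neg fun hkh => hh (hkS h hkh), if_neg hh]
    have h3 : ∑ j : Fin N, (Nkh 𝒩 S h j : ℝ) * C j =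
        ∑ l ∈ Finset.range (h + 2), ∑ j ∈ S l, (Nkh 𝒩 S h j : ℝ) * C j := by
      rw [← Finset.sum_biUnion]
      · refine (Finset.sum_subset (Finset.subset_univ _) ?_).symm
        intro j _ hj
        have hz : Nkh 𝒩 S h j = 0 := by
          rw [Nkh, Finset.card_eq_zero, Finset.filter_eq_empty_iff]
          intro i hi hij
          exact hj (nbr_mem 𝒩 S hS h i j hi hij)
        rw [hz]; simp
      · intro a ha b hb hab
        rcases Nat.lt_or_ge a b with hlt | hge
        · exact disj a b hlt
        · exact (disj b a (by omega)).symm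
    have h4 : ∀ l, ∑ j ∈ S l, (Nkh 𝒩 S h j : ℝ) * C j ≤ (Nmax 𝒩 S l h : ℝ) * T l := by
      intro l
      have : (Nmax 𝒩 S l h : ℝ) * T l = ∑ j ∈ S l, (Nmax 𝒩 S l h : ℝ) * C j := by
        simp only [hTdef]
        rw [Finset.mul_sum]
      rw [this]
      refine Finset.sum_le_sum fun j hj => mul_le_mul_of_nonneg_right ?_ (hC0 j)
      exact Nat.cast_le.mpr (Finset.le_sup hj)
    have h5 : ∑ i ∈ S h, ∑ j ∈ 𝒩 i, C j ≤
        ∑ l ∈ Finset.range (h + 2), (Nmax 𝒩 S l h : ℝ) * T l := by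
      rw [count_lemma 𝒩 S C h, h3]
      exact Finset.sum_le_sum fun l _ => h4 l
    have h6 := mul_le_mul_of_nonneg_left h5 hγ.le
    linarith [h1, h2.le, h2.ge]
  -- key one-step bound
  have key : ∀ h, h < hstar → T h ≤ tg h * E + g h * T (h + 1) := by
    intro h
    induction h using Nat.strong_induction_on with
    | _ h ih =>
    intro hh
    rcases Nat.eq_zero_or_pos h with rfl | h1
    · -- h = 0
      have h0k : (0 : Fin N) ≠ k := by
        intro h0
        have hk0 : k ∈ S 0 := by rw [hS0, ← h0]; exact Finset.mem_singleton_self 0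
        have := hkS 0 hk0
        omega
      have hN0 : S 1 = 𝒩 0 := by
        rw [hS 0, hS0]
        simp [Finset.singleton_biUnion, Finset.sdiff_eq_self_iff_disjoint, hS0, hloop 0]
      have hT0 : T 0 = C 0 := by simp [hTdef, hS0]
      have hC0' := hC 0
      rw [if_neg h0k, ← hN0] at hC0'
      rw [htg0 0 (by omega), hg0, hT0]
      simpa [hTdef] using hC0'
    · -- h ≥ 1
      have hd := hden h h1 hh
      have hQ : ∀ l, l ≤ h → T l ≤
          (∑ i ∈ Finset.Ico l h, tg i * ∏ m ∈ Finset.Ico l i, g m) * E +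
          (∏ m ∈ Finset.Ico l h, g m) * T h :=
        fun l hl => unroll T tg g E h (fun m hm => hgnn m (by omega))
          (fun m hm => ih m hm (by omega)) l hl
      have hsum : ∑ l ∈ Finset.range (h + 1), (Nmax 𝒩 S l h : ℝ) * T l ≤
          (∑ l ∈ Finset.range (h + 1), (Nmax 𝒩 S l h : ℝ) *
            ∑ i ∈ Finset.Ico l h, tg i * ∏ m ∈ Finset.Ico l i, g m) * E +
          (∑ l ∈ Finset.range (h + 1), (Nmax 𝒩 S l h : ℝ) * ∏ m ∈ Finset.Ico l h, g m)
            * T h := by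
        rw [Finset.sum_mul, Finset.sum_mul, ← Finset.sum_add_distrib]
        refine Finset.sum_le_sum fun l hl => ?_
        have hQl := mul_le_mul_of_nonneg_left
          (hQ l (by have := Finset.mem_range.mp hl; omega))
          (Nat.cast_nonneg (Nmax 𝒩 S l h) : (0:ℝ) ≤ _)
        refine hQl.trans (le_of_eq (by ring))
      set SA := ∑ l ∈ Finset.range (h + 1), (Nmax 𝒩 S l h : ℝ) *
        ∑ i ∈ Finset.Ico l h, tg i * ∏ m ∈ Finset.Ico l i, g m with hSAdef
      set SB := ∑ l ∈ Finset.range (h + 1), (Nmax 𝒩 S l h : ℝ) *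
        ∏ m ∈ Finset.Ico l h, g m with hSBdef
      have hmaster := master h
      rw [Finset.sum_range_succ] at hmaster
      have hdeq : denom 𝒩 S γ g h = 1 - γ * SB := rfl
      have hite : (if h = r then E else 0) = (if h = r then (1:ℝ) else 0) * E := by
        by_cases hhr : h = r <;> simp [hhr]
      rw [hite] at hmaster
      have hchain : T h ≤ (if h = r then (1:ℝ) else 0) * E + γ * SA * E + γ * SB * T h
          + γ * (Nmax 𝒩 S (h + 1) h : ℝ) * T (h + 1) := by
        have h7 := mul_le_mul_of_nonneg_left hsum hγ.le
        nlinarith [hmaster, h7]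
      have hmain : denom 𝒩 S γ g h * T h ≤
          ((if h = r then (1:ℝ) else 0) + γ * SA) * E +
          (γ * (Nmax 𝒩 S (h + 1) h : ℝ)) * T (h + 1) := by
        rw [hdeq]
        nlinarith [hchain]
      have hTh : T h ≤ (((if h = r then (1:ℝ) else 0) + γ * SA) * E +
          (γ * (Nmax 𝒩 S (h + 1) h : ℝ)) * T (h + 1)) / denom 𝒩 S γ g h := by
        rw [le_div_iff₀ hd]
        nlinarith [hmain]
      refine hTh.trans (le_of_eq ?_)
      rw [show (((if h = r then (1:ℝ) else 0) + γ * SA) * E +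
          (γ * (Nmax 𝒩 S (h + 1) h : ℝ)) * T (h + 1)) / denom 𝒩 S γ g h =
          (((if h = r then (1:ℝ) else 0) + γ * SA) / denom 𝒩 S γ g h) * E +
          (γ * (Nmax 𝒩 S (h + 1) h : ℝ) / denom 𝒩 S γ g h) * T (h + 1) from by ring,
        ← hgf h h1]
      congr 1
      congr 1
      -- ⊢ ((if h = r then 1 else 0) + γ * SA) / denom = tg h
      rcases lt_trichotomy h r with hlt | heq | hgt
      · have hSA0 : SA = 0 := by
          rw [hSAdef]
          refine Finset.sum_eq_zero fun l hl => ?_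
          rw [Finset.sum_eq_zero fun i hi => by
            rw [htg0 i (lt_of_lt_of_le (Finset.mem_Ico.mp hi).2 hlt.le), zero_mul],
            mul_zero]
        rw [hSA0, if_neg (by omega), htg0 h hlt]
        simp
      · subst heq
        have hSA0 : SA = 0 := by
          rw [hSAdef]
          refine Finset.sum_eq_zero fun l hl => ?_
          rw [Finset.sum_eq_zero fun i hi => by
            rw [htg0 i (Finset.mem_Ico.mp hi).2, zero_mul], mul_zero]
        rw [hSA0, if_pos rfl, htgr, hgf h h1]
        have hsne : (0:ℝ) < (Nmax 𝒩 S (h + 1) h : ℝ) := by exact_mod_cast hs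
        field_simp
        ring
      · rw [if_neg (by omega), htgj h hgt, zero_add]
        congr 2
        rw [hSAdef, Finset.sum_range_succ]
        rw [show (Nmax 𝒩 S h h : ℝ) *
          (∑ i ∈ Finset.Ico h h, tg i * ∏ m ∈ Finset.Ico h i, g m) = 0 by simp,
          add_zero]
        refine Finset.sum_congr rfl fun l hl => ?_
        congr 1
        have hlh : l < h := Finset.mem_range.mp hl
        rcases le_or_gt r l with hrl | hlr
        · rw [max_eq_right hrl]
        · rw [max_eq_left hlr.le,
            ← Finset.sum_Ico_consecutive _ hlr.le (by omega : r ≤ h),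
            Finset.sum_eq_zero fun i hi => by
              rw [htg0 i (Finset.mem_Ico.mp hi).2, zero_mul],
            zero_add]
  refine ⟨?_, ?_⟩
  · intro h hh
    have hkey := key h hh
    simp only [hTdef] at hkey
    by_cases hrh : r ≤ h
    · rw [if_pos hrh]; exact hkey
    · rw [if_neg hrh]
      rw [htg0 h (by omega)] at hkey
      linarith [hkey]
  · have H := unroll T tg g E hstar hgnn key 0 (Nat.zero_le _)
    have hT0 : T 0 = C 0 := by simp [hTdef, hS0]
    have hTs : T hstar = 0 := by simp [hTdef, hhstar]
    rw [hT0, hTs, mul_zero, add_zero] at H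
    refine H.trans (le_of_eq ?_)
    congr 1
    rw [← Finset.sum_Ico_consecutive (fun i => tg i * ∏ m ∈ Finset.Ico 0 i, g m)
        (Nat.zero_le r) (by omega : r ≤ hstar),
      Finset.sum_eq_zero fun i hi => by
        rw [htg0 i (Finset.mem_Ico.mp hi).2, zero_mul],
      zero_add]
    refine Finset.sum_congr rfl fun i _ => ?_
    rw [Finset.range_eq_Ico, mul_comm]
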